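/- Let N be a complete Riemannian manifold, p ∈ N, and R > 0. If g ∈ π₁(B_p(R), p) satisfies d(p̃, g p̃) < 2R, where d is the distance in the universal cover B̃_p(R) of B_p(R) equipped with the lifted Riemannian metric and p̃ is a fixed lift of p, then there exists a minimizing geodesic in B̃_p(R) from p̃ to g p̃, i.e., a geodesic segment whose length equals d(p̃, g p̃). -/

import Mathlib

open Metric unitInterval CategoryTheory
open scoped FundamentalGroupoid ENNReal Manifold

universe u

noncomputable section

/-- The length of a path in a pseudo-emetric space, as the total variation of the
parametrization. -/
def pathLength {X : Type u} [PseudoEMetricSpace X] {x y : X} (γ : Path x y) : ℝ≥0∞ :=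
  eVariationOn γ Set.univ

/-- A (pseudo-e)metric space is a *length space* if the distance between any two points is
the infimum of the lengths of paths joining them. -/
def IsLengthSpace (X : Type u) [PseudoEMetricSpace X] : Prop :=
  ∀ x y : X, edist x y = ⨅ γ : Path x y, pathLength γ

/-- Two loops are homotopic (rel endpoints) *within* the set `S` if there is a path homotopy
between them whose image is contained in `S`. -/
def HomotopicIn {X : Type u} [TopologicalSpace X] {x y : X} (γ₁ γ₂ : Path x y) (S : Set X) :
    Prop :=
  ∃ H : Path.Homotopy γ₁ γ₂, ∀ z : I × I, H z ∈ S

/-- A loop is nullhomotopic within the set `S`. -/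
def NullHomotopicIn {X : Type u} [TopologicalSpace X] {x : X} (γ : Path x x) (S : Set X) :
    Prop :=
  HomotopicIn γ (Path.refl x) S

/-- The homomorphism on fundamental groups induced by a continuous map. -/
def indHom {X Y : Type u} [TopologicalSpace X] [TopologicalSpace Y]
    (f : C(X, Y)) (x : X) : FundamentalGroup X x →* FundamentalGroup Y (f x) :=
  Functor.mapEnd (FundamentalGroupoid.mk x)
    (πₘ (show TopCat.of X ⟶ TopCat.of Y from TopCat.ofHom f))

/-- The class of a loop in the fundamental group. -/
def pathClass {X : Type u} [TopologicalSpace X] {x : X} (γ : Path x x) :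
    FundamentalGroup X x :=
  @FundamentalGroup.fromPath X _ x ⟦γ⟧

/-- The basepoint `p` as a point of the closed ball `B̄_p(r)`. -/
def pcb {X : Type u} [MetricSpace X] (p : X) {r : ℝ} (h0 : 0 ≤ r) : closedBall p r :=
  ⟨p, mem_closedBall_self h0⟩

/-- The basepoint `p` as a point of the open ball `B_p(R)`. -/
def ctr {X : Type u} [MetricSpace X] (p : X) {R : ℝ} (hR : 0 < R) : ball p R :=
  ⟨p, mem_ball_self hR⟩

/-- The inclusion of the closed ball `B̄_p(r)` into the open ball `B_p(R)`, `r < R`. -/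
def cbInclusion {X : Type u} [MetricSpace X] (p : X) {r R : ℝ} (h : r < R) :
    C(closedBall p r, ball p R) :=
  ⟨fun z => ⟨z.1, mem_ball.mpr (lt_of_le_of_lt (mem_closedBall.mp z.2) h)⟩,
    Continuous.subtype_mk continuous_subtype_val _⟩

/-- The geometric semi-local fundamental group `G(p,r,R)`: the image of
`π₁(B̄_p(r), p) → π₁(B_p(R), p)`, as a subgroup of `π₁(B_p(R), p)`. -/
def G {X : Type u} [MetricSpace X] (p : X) {r R : ℝ} (h0 : 0 ≤ r) (hrR : r < R) :
    Subgroup (FundamentalGroup (ball p R) (ctr p (h0.trans_lt hrR))) :=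
  (indHom (cbInclusion p hrR) (pcb p h0)).range

/-- The homomorphism `π₁(B_p(R), p) → π₁(X, p)` induced by inclusion. -/
def toAmb {X : Type u} [MetricSpace X] (p : X) {R : ℝ} (hR : 0 < R) :
    FundamentalGroup (ball p R) (ctr p hR) →* FundamentalGroup X p :=
  indHom ⟨Subtype.val, continuous_subtype_val⟩ (ctr p hR)

/-- The homomorphism `π₁(B̄_p(r), p) → π₁(X, p)` induced by inclusion. -/
def cbToAmb {X : Type u} [MetricSpace X] (p : X) {r : ℝ} (h0 : 0 ≤ r) :
    FundamentalGroup (closedBall p r) (pcb p h0) →* FundamentalGroup X p :=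
  indHom ⟨Subtype.val, continuous_subtype_val⟩ (pcb p h0)

end


section MyAux

section Aux1

variable {X : Type u} [MetricSpace X]

theorem myPathLength_eq_extend {x y : X} (γ : Path x y) :
    pathLength γ = eVariationOn γ.extend (Set.Icc 0 1) := by
  have hmono : MonotoneOn (Set.projIcc (0:ℝ) 1 zero_le_one) (Set.Icc 0 1) :=
    fun a _ b _ hab => Set.monotone_projIcc zero_le_one hab
  have := eVariationOn.comp_eq_of_monotoneOn (γ : I → X) (Set.projIcc 0 1 zero_le_one) hmono
  have himg : Set.projIcc (0:ℝ) 1 zero_le_one '' Set.Icc 0 1 = Set.univ := by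
    ext t
    simp only [Set.mem_image, Set.mem_univ, iff_true]
    exact ⟨t, t.2, Set.projIcc_val zero_le_one t⟩
  rw [himg] at this
  rw [pathLength, ← this]
  rfl

theorem exists_path_length_le (hX : IsLengthSpace X) (x y : X) {ε : ℝ} (hε : 0 < ε) :
    ∃ γ : Path x y, eVariationOn γ.extend (Set.Icc 0 1) ≤ ENNReal.ofReal (dist x y + ε) := by
  have h1 : (⨅ γ : Path x y, pathLength γ) < edist x y + ENNReal.ofReal ε := by
    rw [← hX x y]
    refine ENNReal.lt_add_right (edist_ne_top x y) ?_
    simp [ENNReal.ofReal_eq_zero, not_le, hε]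
  obtain ⟨γ, hγ⟩ := iInf_lt_iff.mp h1
  refine ⟨γ, ?_⟩
  rw [← myPathLength_eq_extend]
  refine hγ.le.trans (le_of_eq ?_)
  rw [edist_dist, ← ENNReal.ofReal_add dist_nonneg hε.le]

/-- Intermediate points in a length space. -/
theorem exists_intermediate (hX : IsLengthSpace X) (x y : X) {a ε : ℝ} (ha : 0 ≤ a)
    (hay : a ≤ dist x y) (hε : 0 < ε) :
    ∃ z : X, dist x z ≤ a + ε ∧ dist z y ≤ dist x y - a + ε := by
  obtain ⟨γ, hγ⟩ := exists_path_length_le hX x y (half_pos hε)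
  set f : ℝ → X := ⇑γ.extend with hf
  have hfc : Continuous f := γ.continuous_extend
  set S : Set ℝ := {t | t ∈ Set.Icc (0:ℝ) 1 ∧ eVariationOn f (Set.Icc 0 t) ≤ ENNReal.ofReal a}
    with hS
  have h0S : (0:ℝ) ∈ S := by
    constructor
    · exact ⟨le_refl 0, zero_le_one⟩
    · rw [Set.Icc_self]
      rw [eVariationOn.subsingleton f (Set.subsingleton_singleton)]
      exact zero_le
  have hSne : S.Nonempty := ⟨0, h0S⟩
  have hSbdd : BddAbove S := ⟨1, fun t ht => ht.1.2⟩
  set T := sSup S with hT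
  have hT0 : 0 ≤ T := le_csSup hSbdd h0S
  have hT1 : T ≤ 1 := csSup_le hSne (fun t ht => ht.1.2)
  refine ⟨f T, ?_, ?_⟩
  · -- dist x (f T) ≤ a
    have hclosed : IsClosed {t : ℝ | edist (f 0) (f t) ≤ ENNReal.ofReal a} := by
      have : Continuous fun t => edist (f 0) (f t) := (continuous_const.edist hfc)
      exact isClosed_le this continuous_const
    have hsub : S ⊆ {t : ℝ | edist (f 0) (f t) ≤ ENNReal.ofReal a} := by
      intro t ht
      refine le_trans ?_ ht.2
      exact eVariationOn.edist_le f ⟨le_refl 0, ht.1.1⟩ ⟨ht.1.1, le_refl t⟩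
    have hTmem : T ∈ {t : ℝ | edist (f 0) (f t) ≤ ENNReal.ofReal a} :=
      hclosed.closure_subset ((closure_mono hsub) (csSup_mem_closure hSne hSbdd))
    have := hTmem
    rw [Set.mem_setOf_eq, edist_dist, ENNReal.ofReal_le_ofReal_iff ha] at this
    rw [hf, Path.extend_zero] at this
    linarith [this]
  · -- dist (f T) y ≤ dist x y - a + ε
    have hb0 : (0:ℝ) ≤ dist x y - a + ε := by linarith
    have key : Set.Ioc T 1 ⊆ {t : ℝ | edist (f t) (f 1) ≤ ENNReal.ofReal (dist x y - a + ε)} := by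
      intro t ht
      have htI : t ∈ Set.Icc (0:ℝ) 1 := ⟨le_trans hT0 ht.1.le, ht.2⟩
      have hnotS : t ∉ S := fun hmem => absurd (le_csSup hSbdd hmem) (not_le.mpr ht.1)
      have hvt : ENNReal.ofReal a < eVariationOn f (Set.Icc 0 t) := by
        by_contra hcon
        exact hnotS ⟨htI, not_lt.mp hcon⟩
      have hsplit : eVariationOn f (Set.Icc 0 t) + eVariationOn f (Set.Icc t 1)
          = eVariationOn f (Set.Icc 0 1) := by
        have := eVariationOn.Icc_add_Icc f (s := Set.univ) htI.1 htI.2 (Set.mem_univ t)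
        simpa using this
      have hle : eVariationOn f (Set.Icc t 1)
          ≤ ENNReal.ofReal (dist x y + ε/2) - ENNReal.ofReal a := by
        have h2 : eVariationOn f (Set.Icc 0 t) + eVariationOn f (Set.Icc t 1)
            ≤ ENNReal.ofReal (dist x y + ε/2) := hsplit.le.trans hγ
        refine ENNReal.le_sub_of_add_le_left ENNReal.ofReal_ne_top ?_
        exact le_trans (add_le_add hvt.le (le_refl _)) h2
      have hed : edist (f t) (f 1) ≤ eVariationOn f (Set.Icc t 1) :=
        eVariationOn.edist_le f ⟨le_refl t, ht.2⟩ ⟨ht.2, le_refl 1⟩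
      refine hed.trans (hle.trans ?_)
      rw [← ENNReal.ofReal_sub _ ha]
      exact ENNReal.ofReal_le_ofReal (by linarith)
    have hclosed' : IsClosed {t : ℝ | edist (f t) (f 1) ≤ ENNReal.ofReal (dist x y - a + ε)} :=
      isClosed_le (hfc.edist continuous_const) continuous_const
    have hTmem : edist (f T) (f 1) ≤ ENNReal.ofReal (dist x y - a + ε) := by
      rcases eq_or_lt_of_le hT1 with hT1' | hT1'
      · rw [hT1']
        simp [hb0]
      · have hclos : T ∈ closure (Set.Ioc T 1) := by
          rw [closure_Ioc hT1'.ne]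
          exact ⟨le_refl T, hT1⟩
        exact hclosed'.closure_subset ((closure_mono key) hclos)
    rw [edist_dist, ENNReal.ofReal_le_ofReal_iff hb0] at hTmem
    rw [hf, Path.extend_one] at hTmem
    exact hTmem

end Aux1

section HR
variable {X : Type u} [MetricSpace X]

theorem hr_step [LocallyCompactSpace X] (hX : IsLengthSpace X) (x : X) {r : ℝ} (hr : 0 ≤ r)
    (hc : IsCompact (closedBall x r)) : ∃ ε > 0, IsCompact (closedBall x (r + ε)) := by
  have hloc : ∀ y : X, ∃ ρ, 0 < ρ ∧ IsCompact (closedBall y ρ) := by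
    intro y
    obtain ⟨K, hKc, hK⟩ := exists_compact_mem_nhds y
    obtain ⟨ρ, hρ, hball⟩ := Metric.nhds_basis_closedBall.mem_iff.mp hK
    exact ⟨ρ, hρ, hKc.of_isClosed_subset isClosed_closedBall hball⟩
  choose ρ hρpos hρc using hloc
  have hcover : closedBall x r ⊆ ⋃ y ∈ closedBall x r, ball y (ρ y / 4) :=
    fun y hy => Set.mem_biUnion hy (mem_ball_self (by linarith [hρpos y]))
  obtain ⟨F, hFsub, hFfin, hFcov⟩ :=
    hc.elim_finite_subcover_image (fun y _ => isOpen_ball) hcover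
  have hxF : ∃ y ∈ F, x ∈ ball y (ρ y / 4) := by
    have := hFcov (mem_closedBall_self hr)
    simpa using this
  lift F to Finset X using hFfin
  have hxF2 := hxF
  obtain ⟨y₀, hy₀F, _⟩ := hxF2
  have hFne : F.Nonempty := ⟨y₀, by simpa using hy₀F⟩
  set ε : ℝ := F.inf' hFne (fun y => ρ y / 4) with hε
  have hεpos : 0 < ε := by
    rw [hε, Finset.lt_inf'_iff]
    exact fun y _ => by linarith [hρpos y]
  have hεle : ∀ y ∈ F, ε ≤ ρ y / 4 := fun y hy => Finset.inf'_le _ hy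
  refine ⟨ε/2, by positivity, ?_⟩
  have hsub : closedBall x (r + ε/2) ⊆ ⋃ y ∈ F, closedBall y (ρ y) := by
    intro z hz
    rw [mem_closedBall, dist_comm] at hz
    rcases lt_or_ge (dist x z) (3*ε/4) with hcase | hcase
    · obtain ⟨y, hyF, hxy⟩ := hxF
      rw [mem_ball, dist_comm] at hxy
      refine Set.mem_biUnion (by simpa using hyF) ?_
      rw [mem_closedBall, dist_comm]
      have h1 := hεle y (by simpa using hyF)
      calc dist y z ≤ dist y x + dist x z := dist_triangle _ _ _
        _ ≤ ρ y / 4 + 3*ε/4 := add_le_add hxy.le hcase.le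
        _ ≤ ρ y / 4 + 3*(ρ y /4)/4 := by linarith
        _ ≤ ρ y := by linarith [hρpos y]
    · set a := dist x z - 3*ε/4 with ha
      have ha0 : 0 ≤ a := by simp [ha]; linarith
      have haxz : a ≤ dist x z := by simp [ha]; linarith
      obtain ⟨w, hw1, hw2⟩ := exists_intermediate hX x z ha0 haxz (show (0:ℝ) < ε/4 by positivity)
      have hwr : w ∈ closedBall x r := by
        rw [mem_closedBall, dist_comm]
        simp only [ha] at hw1
        linarith
      have hwz : dist w z ≤ ε := by simp only [ha] at hw2; linarith
      obtain ⟨y, hyF, hwy⟩ : ∃ y ∈ F, w ∈ ball y (ρ y / 4) := by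
        have := hFcov hwr; simpa using this
      refine Set.mem_biUnion hyF ?_
      rw [mem_ball, dist_comm] at hwy
      rw [mem_closedBall, dist_comm]
      have h1 := hεle y hyF
      calc dist y z ≤ dist y w + dist w z := dist_triangle _ _ _
        _ ≤ ρ y /4 + ε := add_le_add hwy.le hwz
        _ ≤ ρ y /4 + ρ y /4 := by linarith
        _ ≤ ρ y := by linarith [hρpos y]
  have hcpt : IsCompact (⋃ y ∈ F, closedBall y (ρ y)) :=
    F.finite_toSet.isCompact_biUnion (fun y _ => hρc y)
  exact hcpt.of_isClosed_subset isClosed_closedBall hsub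

theorem hr_closed [CompleteSpace X] (hX : IsLengthSpace X) (x : X) {r : ℝ} (hr : 0 < r)
    (h : ∀ r', 0 ≤ r' → r' < r → IsCompact (closedBall x r')) : IsCompact (closedBall x r) := by
  rw [isCompact_iff_totallyBounded_isComplete]
  refine ⟨?_, isClosed_closedBall.isComplete⟩
  rw [totallyBounded_iff]
  intro δ hδ
  rcases lt_or_ge r δ with hcase | hcase
  · refine ⟨{x}, Set.finite_singleton x, ?_⟩
    intro z hz
    simp only [Set.mem_singleton_iff, Set.iUnion_iUnion_eq_left]
    rw [mem_closedBall, dist_comm] at hz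
    rw [mem_ball, dist_comm]
    linarith
  · have hr' : 0 ≤ r - δ/8 := by linarith
    have hcr' : IsCompact (closedBall x (r - δ/8)) := h _ hr' (by linarith)
    obtain ⟨t', ht'fin, ht'cov⟩ := totallyBounded_iff.mp hcr'.totallyBounded (δ/2) (by positivity)
    refine ⟨insert x t', ht'fin.insert x, ?_⟩
    intro z hz
    rw [mem_closedBall, dist_comm] at hz
    rcases lt_or_ge (dist x z) (δ/4) with hc2 | hc2
    · refine Set.mem_biUnion (Set.mem_insert x t') ?_
      rw [mem_ball, dist_comm]; linarith
    · set a := dist x z - δ/4 with ha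
      have ha0 : 0 ≤ a := by simp [ha]; linarith
      have haxz : a ≤ dist x z := by simp [ha]; linarith
      obtain ⟨w, hw1, hw2⟩ := exists_intermediate hX x z ha0 haxz (show (0:ℝ) < δ/8 by positivity)
      have hwr : w ∈ closedBall x (r - δ/8) := by
        rw [mem_closedBall, dist_comm]
        simp only [ha] at hw1
        linarith
      have hwz : dist w z ≤ 3*δ/8 := by simp only [ha] at hw2; linarith
      obtain ⟨y, hyt, hwy⟩ : ∃ y ∈ t', w ∈ ball y (δ/2) := by
        have := ht'cov hwr; simpa using this
      refine Set.mem_biUnion (Set.mem_insert_of_mem x hyt) ?_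
      rw [mem_ball] at hwy
      rw [mem_ball, dist_comm]
      calc dist y z ≤ dist y w + dist w z := dist_triangle _ _ _
        _ < δ/2 + 3*δ/8 := add_lt_add_of_lt_of_le (by rw [dist_comm]; exact hwy) hwz
        _ < δ := by linarith

theorem hr_proper [LocallyCompactSpace X] [CompleteSpace X] (hX : IsLengthSpace X) (x : X)
    (r : ℝ) : IsCompact (closedBall x r) := by
  by_contra hcon
  have hr0 : 0 ≤ r := by
    by_contra hneg
    rw [closedBall_eq_empty.mpr (by linarith)] at hcon
    exact hcon isCompact_empty
  set B := {s : ℝ | 0 ≤ s ∧ ¬ IsCompact (closedBall x s)} with hB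
  have hBne : B.Nonempty := ⟨r, hr0, hcon⟩
  have hBbdd : BddBelow B := ⟨0, fun s hs => hs.1⟩
  set t := sInf B with ht
  have ht0 : 0 ≤ t := le_csInf hBne (fun s hs => hs.1)
  have htlb : ∀ s, 0 ≤ s → s < t → IsCompact (closedBall x s) := by
    intro s hs0 hst
    by_contra hcc
    exact absurd (csInf_le hBbdd ⟨hs0, hcc⟩) (not_le.mpr hst)
  have hct : IsCompact (closedBall x t) := by
    rcases eq_or_lt_of_le ht0 with ht0' | ht0'
    · rw [← ht0', closedBall_zero]
      exact isCompact_singleton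
    · exact hr_closed hX x ht0' (fun r' h0 hlt => htlb r' h0 hlt)
  obtain ⟨ε, hεpos, hcε⟩ := hr_step hX x ht0 hct
  have : t + ε ≤ t := by
    rw [ht]
    refine le_csInf hBne ?_
    intro b hb
    by_contra hble
    push_neg at hble
    exact hb.2 (hcε.of_isClosed_subset isClosed_closedBall (closedBall_subset_closedBall hble.le))
  linarith
end HR

section Aux2
variable {E : Type u} {N : Type u} [MetricSpace E] [MetricSpace N] {Q : E → N}

theorem uniform_radius
    (hloc : ∀ e : E, ∃ ε > 0, ∀ x y : E, dist x e < ε → dist y e < ε →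
      dist (Q x) (Q y) = dist x y)
    {K : Set E} (hK : IsCompact K) :
    ∃ ε₀ > 0, ∀ e ∈ K, ∀ x y : E, dist x e < ε₀ → dist y e < ε₀ →
      dist (Q x) (Q y) = dist x y := by
  choose ε hεpos hε using hloc
  have hcover : K ⊆ ⋃ e ∈ K, ball e (ε e / 2) :=
    fun e he => Set.mem_biUnion he (mem_ball_self (by linarith [hεpos e]))
  obtain ⟨F, hFsub, hFfin, hFcov⟩ :=
    hK.elim_finite_subcover_image (fun e _ => isOpen_ball) hcover
  lift F to Finset E using hFfin
  rcases Finset.eq_empty_or_nonempty F with hFe | hFne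
  · refine ⟨1, one_pos, ?_⟩
    intro e he
    exfalso
    have := hFcov he
    simp [hFe] at this
  · set ε₀ := F.inf' hFne (fun e => ε e / 2) with hε₀
    have hpos : 0 < ε₀ := by
      rw [hε₀, Finset.lt_inf'_iff]; exact fun e _ => by linarith [hεpos e]
    refine ⟨ε₀, hpos, ?_⟩
    intro e he x y hx hy
    obtain ⟨e', he'F, hee'⟩ : ∃ e' ∈ (F : Set E), e ∈ ball e' (ε e' / 2) := by
      have := hFcov he; simpa using this
    have hle : ε₀ ≤ ε e' / 2 := Finset.inf'_le _ he'F
    rw [mem_ball] at hee'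
    refine hε e' x y ?_ ?_
    · calc dist x e' ≤ dist x e + dist e e' := dist_triangle _ _ _
        _ < ε₀ + ε e' / 2 := add_lt_add hx hee'
        _ ≤ ε e' := by linarith
    · calc dist y e' ≤ dist y e + dist e e' := dist_triangle _ _ _
        _ < ε₀ + ε e' / 2 := add_lt_add hy hee'
        _ ≤ ε e' := by linarith

private theorem sum_eVar_chain (f : ℝ → E) (u : ℕ → ℝ) (hu : Monotone u) :
    ∀ n : ℕ, (∑ i ∈ Finset.range n, eVariationOn f (Set.Icc (u i) (u (i+1))))
      ≤ eVariationOn f (Set.Icc (u 0) (u n)) := by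
  intro n
  induction n with
  | zero => simp
  | succ n ih =>
    rw [Finset.sum_range_succ]
    have h2 := eVariationOn.Icc_add_Icc f (s := Set.univ) (hu (Nat.zero_le n)) (hu n.le_succ)
      (Set.mem_univ (u n))
    simp only [Set.univ_inter] at h2
    calc (∑ i ∈ Finset.range n, eVariationOn f (Set.Icc (u i) (u (i+1))))
          + eVariationOn f (Set.Icc (u n) (u (n+1)))
        ≤ eVariationOn f (Set.Icc (u 0) (u n)) + eVariationOn f (Set.Icc (u n) (u (n+1))) :=
          add_le_add ih le_rfl
      _ = eVariationOn f (Set.Icc (u 0) (u (n+1))) := h2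

theorem eVariationOn_comp_le
    (hloc : ∀ e : E, ∃ ε > 0, ∀ x y : E, dist x e < ε → dist y e < ε →
      dist (Q x) (Q y) = dist x y)
    (Γ : ℝ → E) (hΓ : ContinuousOn Γ (Set.Icc 0 1)) :
    eVariationOn (Q ∘ Γ) (Set.Icc 0 1) ≤ eVariationOn Γ (Set.Icc 0 1) := by
  have hK : IsCompact (Γ '' Set.Icc 0 1) := isCompact_Icc.image_of_continuousOn hΓ
  obtain ⟨ε₀, hε₀, hur⟩ := uniform_radius hloc hK
  obtain ⟨δ, hδ, hUC⟩ := (Metric.uniformContinuousOn_iff.mp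
    (isCompact_Icc.uniformContinuousOn_of_continuous hΓ)) ε₀ hε₀
  -- key two-point estimate
  have key : ∀ a b : ℝ, a ∈ Set.Icc (0:ℝ) 1 → b ∈ Set.Icc (0:ℝ) 1 → a ≤ b →
      edist (Q (Γ a)) (Q (Γ b)) ≤ eVariationOn Γ (Set.Icc a b) := by
    intro a b haI hbI hab
    rcases eq_or_lt_of_le hab with rfl | hab'
    · simp
    set m : ℕ := ⌈(b - a)/(δ/2)⌉₊ with hm
    have hm0 : 0 < m := Nat.ceil_pos.mpr (div_pos (by linarith) (by linarith))
    have hstep : (b - a)/m ≤ δ/2 := by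
      rw [div_le_iff₀ (by exact_mod_cast hm0)]
      have := Nat.le_ceil ((b - a)/(δ/2))
      calc b - a = ((b-a)/(δ/2)) * (δ/2) := by field_simp
        _ ≤ (m : ℝ) * (δ/2) := by
            apply mul_le_mul_of_nonneg_right _ (by linarith)
            exact_mod_cast this
        _ = δ/2 * m := by ring
    set w : ℕ → ℝ := fun j => a + (min j m : ℕ) * ((b - a)/m) with hw
    have hwmono : Monotone w := by
      intro i j hij
      have : (min i m : ℕ) ≤ (min j m : ℕ) := min_le_min hij le_rfl
      have hnn : (0:ℝ) ≤ (b - a)/m := div_nonneg (by linarith) (Nat.cast_nonneg m)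
      simp only [hw]
      have : ((min i m : ℕ) : ℝ) ≤ ((min j m : ℕ) : ℝ) := by exact_mod_cast this
      nlinarith
    have hwI : ∀ j, w j ∈ Set.Icc a b := by
      intro j
      have h1 : ((min j m : ℕ) : ℝ) ≤ (m : ℝ) := by exact_mod_cast min_le_right j m
      have h2 : (0:ℝ) ≤ ((min j m : ℕ) : ℝ) := Nat.cast_nonneg _
      have hnn : (0:ℝ) ≤ (b - a)/m := div_nonneg (by linarith) (Nat.cast_nonneg m)
      constructor
      · simp only [hw]; nlinarith
      · simp only [hw]
        have hmne : (m:ℝ) ≠ 0 := by exact_mod_cast hm0.ne'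
        have : ((min j m : ℕ) : ℝ) * ((b - a)/m) ≤ (m : ℝ) * ((b-a)/m) :=
          mul_le_mul_of_nonneg_right h1 hnn
        have heq : (m : ℝ) * ((b-a)/m) = b - a := by field_simp
        linarith [this, heq.le]
    have hwsub : ∀ j, w j ∈ Set.Icc (0:ℝ) 1 :=
      fun j => ⟨haI.1.trans (hwI j).1, (hwI j).2.trans hbI.2⟩
    have hw0 : w 0 = a := by simp [hw]
    have hwm : w m = b := by
      simp only [hw, min_self]
      have hmne : (m:ℝ) ≠ 0 := by exact_mod_cast hm0.ne'
      field_simp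
      ring
    have hstepsmall : ∀ j, dist (w (j+1)) (w j) < δ := by
      intro j
      rw [Real.dist_eq]
      have h1 : w j ≤ w (j+1) := hwmono (Nat.le_succ j)
      have h2 : w (j+1) - w j ≤ (b-a)/m := by
        simp only [hw]
        have hmin : ((min (j+1) m : ℕ) : ℝ) ≤ ((min j m : ℕ) : ℝ) + 1 := by
          have : min (j+1) m ≤ min j m + 1 := by omega
          exact_mod_cast this
        have hnn : (0:ℝ) ≤ (b - a)/m := div_nonneg (by linarith) (Nat.cast_nonneg m)
        nlinarith
      rw [abs_of_nonneg (by linarith)]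
      have h3 : w (j+1) - w j ≤ δ/2 := h2.trans hstep
      exact h3.trans_lt (by linarith)
    have hterm : ∀ j, edist (Q (Γ (w j))) (Q (Γ (w (j+1)))) = edist (Γ (w j)) (Γ (w (j+1)))
        := by
      intro j
      have hΓd : dist (Γ (w (j+1))) (Γ (w j)) < ε₀ :=
        hUC _ (hwsub (j+1)) _ (hwsub j) (hstepsmall j)
      have hmem : Γ (w j) ∈ Γ '' Set.Icc 0 1 := ⟨w j, hwsub j, rfl⟩
      have := hur (Γ (w j)) hmem (Γ (w j)) (Γ (w (j+1)))
        (by rw [dist_self]; exact hε₀) hΓd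
      rw [edist_dist, edist_dist, this]
    calc edist (Q (Γ a)) (Q (Γ b)) = edist (Q (Γ (w 0))) (Q (Γ (w m))) := by rw [hw0, hwm]
      _ ≤ ∑ i ∈ Finset.range m, edist (Q (Γ (w i))) (Q (Γ (w (i+1)))) :=
          edist_le_range_sum_edist (fun j => Q (Γ (w j))) m
      _ = ∑ i ∈ Finset.range m, edist (Γ (w (i+1))) (Γ (w i)) := by
          refine Finset.sum_congr rfl fun i _ => ?_
          rw [hterm i, edist_comm]
      _ ≤ eVariationOn Γ (Set.Icc a b) := eVariationOn.sum_le (f := Γ) (n := m) hwmono hwI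
  -- now bound the supremum
  unfold eVariationOn
  refine iSup_le ?_
  rintro ⟨n, ⟨u, hu, us⟩⟩
  calc (∑ i ∈ Finset.range n, edist ((Q ∘ Γ) (u (i+1))) ((Q ∘ Γ) (u i)))
      = ∑ i ∈ Finset.range n, edist (Q (Γ (u i))) (Q (Γ (u (i+1)))) := by
        refine Finset.sum_congr rfl fun i _ => ?_
        rw [edist_comm]; rfl
    _ ≤ ∑ i ∈ Finset.range n, eVariationOn Γ (Set.Icc (u i) (u (i+1))) := by
        refine Finset.sum_le_sum fun i _ => ?_
        exact key (u i) (u (i+1)) (us i) (us (i+1)) (hu i.le_succ)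
    _ ≤ eVariationOn Γ (Set.Icc (u 0) (u n)) := sum_eVar_chain Γ u hu n
    _ ≤ eVariationOn Γ (Set.Icc 0 1) :=
        eVariationOn.mono Γ (Set.Icc_subset_Icc (us 0).1 (us n).2)

theorem Q_lipschitz
    (hloc : ∀ e : E, ∃ ε > 0, ∀ x y : E, dist x e < ε → dist y e < ε →
      dist (Q x) (Q y) = dist x y)
    (hlenE : IsLengthSpace E) (x y : E) : dist (Q x) (Q y) ≤ dist x y := by
  have h : edist (Q x) (Q y) ≤ edist x y := by
    rw [hlenE x y]
    refine le_iInf fun γ => ?_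
    have h1 : edist (Q x) (Q y) ≤ eVariationOn (Q ∘ γ.extend) (Set.Icc 0 1) := by
      have h0 := eVariationOn.edist_le (Q ∘ γ.extend)
        (Set.left_mem_Icc.2 zero_le_one) (Set.right_mem_Icc.2 zero_le_one)
      simpa [Path.extend_zero, Path.extend_one] using h0
    refine h1.trans ((eVariationOn_comp_le hloc γ.extend γ.continuous_extend.continuousOn).trans
      (le_of_eq ?_))
    rw [← myPathLength_eq_extend]
  rw [edist_dist, edist_dist, ENNReal.ofReal_le_ofReal_iff dist_nonneg] at h
  exact h
end Aux2

theorem exists_lipschitz_path {X : Type u} [MetricSpace X] {x y : X} (γ : Path x y)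
    {L : ℝ} (hL : 0 < L) (h : eVariationOn γ.extend (Set.Icc 0 1) ≤ ENNReal.ofReal L) :
    ∃ γ' : Path x y, ∀ s t : I, dist (γ' s) (γ' t) ≤ L * |(s:ℝ) - (t:ℝ)| := by
  set f := γ.extend with hf
  have hfc : Continuous f := γ.continuous_extend
  set S : ℝ → Set ℝ := fun c =>
    {t | t ∈ Set.Icc (0:ℝ) 1 ∧ eVariationOn f (Set.Icc 0 t) ≤ ENNReal.ofReal (c * L)} with hS
  have hSne : ∀ c : ℝ, 0 ≤ c → (0:ℝ) ∈ S c := by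
    intro c hc
    refine ⟨⟨le_rfl, zero_le_one⟩, ?_⟩
    rw [Set.Icc_self, eVariationOn.subsingleton f Set.subsingleton_singleton]
    exact zero_le
  have hSbdd : ∀ c, BddAbove (S c) := fun c => ⟨1, fun t ht => ht.1.2⟩
  set u : ℝ → ℝ := fun c => sSup (S c) with hu
  have hu0 : ∀ c, 0 ≤ c → 0 ≤ u c := fun c hc => le_csSup (hSbdd c) (hSne c hc)
  have hu1 : ∀ c, 0 ≤ c → u c ≤ 1 := fun c hc => csSup_le ⟨0, hSne c hc⟩ (fun t ht => ht.1.2)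
  have hvfin : ∀ t, t ∈ Set.Icc (0:ℝ) 1 → eVariationOn f (Set.Icc 0 t) ≠ ⊤ := by
    intro t ht
    exact ne_top_of_le_ne_top (ENNReal.ofReal_ne_top (r := L))
      ((eVariationOn.mono f (Set.Icc_subset_Icc le_rfl ht.2)).trans h)
  -- key estimate
  have key : ∀ c c' : ℝ, 0 ≤ c → c ≤ c' →
      edist (f (u c)) (f (u c')) ≤ ENNReal.ofReal ((c' - c) * L) := by
    intro c c' hc hcc'
    have hc' : 0 ≤ c' := hc.trans hcc'
    have humono : u c ≤ u c' := by
      refine csSup_le_csSup (hSbdd c') ⟨0, hSne c hc⟩ ?_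
      intro t ht
      exact ⟨ht.1, ht.2.trans (ENNReal.ofReal_le_ofReal (by nlinarith))⟩
    rcases eq_or_lt_of_le humono with heq | hlt
    · rw [heq, edist_self]
      exact zero_le
    -- Step A
    have stepA : Set.Ioc (u c) (u c') ⊆
        {t : ℝ | edist (f t) (f (u c')) ≤ ENNReal.ofReal ((c' - c) * L)} := by
      intro t ht
      have htI : t ∈ Set.Icc (0:ℝ) 1 := ⟨(hu0 c hc).trans ht.1.le, ht.2.trans (hu1 c' hc')⟩
      have hnotS : t ∉ S c := fun hmem => absurd (le_csSup (hSbdd c) hmem) (not_le.mpr ht.1)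
      have hvt : ENNReal.ofReal (c * L) < eVariationOn f (Set.Icc 0 t) := by
        by_contra hcon
        exact hnotS ⟨htI, not_lt.mp hcon⟩
      -- subset of S c' above t lands in closed set
      have hsubC : Set.Ioi t ∩ S c' ⊆
          {t' : ℝ | edist (f t) (f t') ≤ ENNReal.ofReal ((c' - c) * L)} := by
        intro t' ⟨htt', ht'S⟩
        have htt'le : t ≤ t' := htt'.le
        have hsplit : eVariationOn f (Set.Icc 0 t) + eVariationOn f (Set.Icc t t')
            = eVariationOn f (Set.Icc 0 t') := by
          have := eVariationOn.Icc_add_Icc f (s := Set.univ) htI.1 htt'le (Set.mem_univ t)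
          simpa using this
        have h1 : eVariationOn f (Set.Icc t t')
            ≤ ENNReal.ofReal (c' * L) - ENNReal.ofReal (c * L) := by
          refine ENNReal.le_sub_of_add_le_left ENNReal.ofReal_ne_top ?_
          calc ENNReal.ofReal (c * L) + eVariationOn f (Set.Icc t t')
              ≤ eVariationOn f (Set.Icc 0 t) + eVariationOn f (Set.Icc t t') :=
                add_le_add hvt.le le_rfl
            _ = eVariationOn f (Set.Icc 0 t') := hsplit
            _ ≤ ENNReal.ofReal (c' * L) := ht'S.2
        have h2 : edist (f t) (f t') ≤ eVariationOn f (Set.Icc t t') :=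
          eVariationOn.edist_le f ⟨le_rfl, htt'le⟩ ⟨htt'le, le_rfl⟩
        refine (h2.trans h1).trans (le_of_eq ?_)
        rw [← ENNReal.ofReal_sub _ (by positivity)]
        ring_nf
      -- u c' is in the closure of that subset
      rcases eq_or_lt_of_le ht.2 with rfl | htlt
      · simp
      have hSc'ne : (S c').Nonempty := ⟨0, hSne c' hc'⟩
      have hwit : ∃ s₀ ∈ S c', t < s₀ := exists_lt_of_lt_csSup hSc'ne htlt
      obtain ⟨s₀, hs₀S, hts₀⟩ := hwit
      have hne2 : (Set.Ioi t ∩ S c').Nonempty := ⟨s₀, hts₀, hs₀S⟩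
      have hbdd2 : BddAbove (Set.Ioi t ∩ S c') :=
        (hSbdd c').mono Set.inter_subset_right
      have hsup2 : sSup (Set.Ioi t ∩ S c') = u c' := by
        refine le_antisymm (csSup_le_csSup (hSbdd c') hne2 Set.inter_subset_right) ?_
        refine csSup_le hSc'ne ?_
        intro s hs
        rcases le_or_gt s t with hst | hst
        · exact (hst.trans hts₀.le).trans (le_csSup hbdd2 ⟨hts₀, hs₀S⟩)
        · exact le_csSup hbdd2 ⟨hst, hs⟩
      have hclosed : IsClosed {t' : ℝ | edist (f t) (f t') ≤ ENNReal.ofReal ((c' - c) * L)} :=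
        isClosed_le (continuous_const.edist hfc) continuous_const
      have : u c' ∈ closure (Set.Ioi t ∩ S c') := by
        rw [← hsup2]
        exact csSup_mem_closure hne2 hbdd2
      exact hclosed.closure_subset ((closure_mono hsubC) this)
    -- Step B
    have hclosed' : IsClosed {t : ℝ | edist (f t) (f (u c')) ≤ ENNReal.ofReal ((c' - c) * L)} :=
      isClosed_le (hfc.edist continuous_const) continuous_const
    have : u c ∈ closure (Set.Ioc (u c) (u c')) := by
      rw [closure_Ioc hlt.ne]
      exact ⟨le_rfl, humono⟩
    exact hclosed'.closure_subset ((closure_mono stepA) this)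
  -- define the path
  set g : I → X := fun c => f (u c) with hg
  have hdist : ∀ s t : I, dist (g s) (g t) ≤ L * |(s:ℝ) - (t:ℝ)| := by
    have main : ∀ s t : I, (s:ℝ) ≤ t → dist (g s) (g t) ≤ L * ((t:ℝ) - s) := by
      intro s t hst
      have := key s t s.2.1 hst
      rw [edist_dist, ENNReal.ofReal_le_ofReal_iff (by nlinarith)] at this
      calc dist (g s) (g t) ≤ ((t:ℝ) - s) * L := this
        _ = L * ((t:ℝ) - s) := by ring
    intro s t
    rcases le_total (s:ℝ) t with hst | hst
    · rw [abs_of_nonpos (by linarith), neg_sub]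
      exact main s t hst
    · rw [abs_of_nonneg (by linarith), dist_comm]
      exact main t s hst
  have hcont : Continuous g := by
    have : LipschitzWith (Real.toNNReal L) g := by
      refine LipschitzWith.of_dist_le_mul ?_
      intro s t
      refine (hdist s t).trans ?_
      rw [Real.coe_toNNReal L hL.le, Subtype.dist_eq, Real.dist_eq]
    exact this.continuous
  have hg0 : g 0 = x := by
    have hsubC : S 0 ⊆ {t : ℝ | edist (f 0) (f t) ≤ 0} := by
      intro t ht
      have h1 : edist (f 0) (f t) ≤ eVariationOn f (Set.Icc 0 t) :=
        eVariationOn.edist_le f ⟨le_rfl, ht.1.1⟩ ⟨ht.1.1, le_rfl⟩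
      refine h1.trans (le_of_eq ?_)
      have := ht.2
      rw [zero_mul, ENNReal.ofReal_zero] at this
      exact le_antisymm this (zero_le)
    have hclosed : IsClosed {t : ℝ | edist (f 0) (f t) ≤ 0} :=
      isClosed_le (continuous_const.edist hfc) continuous_const
    have hmem : u 0 ∈ {t : ℝ | edist (f 0) (f t) ≤ 0} :=
      hclosed.closure_subset ((closure_mono hsubC) (csSup_mem_closure ⟨0, hSne 0 le_rfl⟩ (hSbdd 0)))
    have : edist (f 0) (f (u 0)) = 0 := le_antisymm hmem (zero_le)
    rw [edist_eq_zero] at this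
    show f (u 0) = x
    rw [← this, hf, Path.extend_zero]
  have hg1 : g 1 = y := by
    have hu1eq : u 1 = 1 := by
      refine le_antisymm (hu1 1 zero_le_one) ?_
      refine le_csSup (hSbdd 1) ⟨⟨zero_le_one, le_rfl⟩, ?_⟩
      rw [one_mul]
      exact h
    show f (u 1) = y
    rw [hu1eq, hf, Path.extend_one]
  exact ⟨⟨⟨g, hcont⟩, hg0, hg1⟩, hdist⟩

theorem covering_path_lift {E X : Type u} [TopologicalSpace E] [TopologicalSpace X]
    {q : E → X} (hq : IsCoveringMap q) (sb : C(I, X)) (e₀ : E) (h0 : q e₀ = sb 0) :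
    ∃ Γ : C(I, E), Γ 0 = e₀ ∧ ∀ t, q (Γ t) = sb t := by
  set ss : ℝ → X := fun r => sb (Set.projIcc 0 1 zero_le_one r) with hss
  have hssc : Continuous ss := sb.continuous.comp continuous_projIcc
  have hssI : ∀ u : I, ss (u : ℝ) = sb u := fun u => by
    simp only [hss, Set.projIcc_val]
  set A : Set ℝ := {r : ℝ | (0 ≤ r ∧ r ≤ 1) ∧
      ∃ Γ : C(I, E), Γ 0 = e₀ ∧ ∀ u : I, q (Γ u) = ss (min (u : ℝ) r)} with hA
  have h0A : (0:ℝ) ∈ A := by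
    refine ⟨⟨le_rfl, zero_le_one⟩, ContinuousMap.const I e₀, rfl, ?_⟩
    intro u
    have : min (u:ℝ) 0 = ((0 : I) : ℝ) := by
      simp [min_eq_right u.2.1]
    simp only [ContinuousMap.const_apply, this, hssI]
    exact h0
  have hAne : A.Nonempty := ⟨0, h0A⟩
  have hAbdd : BddAbove A := ⟨1, fun r hr => hr.1.2⟩
  set T : ℝ := sSup A with hT
  have hT0 : 0 ≤ T := le_csSup hAbdd h0A
  have hT1 : T ≤ 1 := csSup_le hAne (fun r hr => hr.1.2)
  have hne : Nonempty (q ⁻¹' {ss T}) := by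
    obtain ⟨_, U, hTU, hUo, _, H, _⟩ := hq (ss T)
    obtain ⟨ε, hε, hball⟩ :=
      Metric.mem_nhds_iff.mp (hssc.continuousAt.preimage_mem_nhds (hUo.mem_nhds hTU))
    obtain ⟨t₀, ⟨⟨h0, h1⟩, Γ₀, _, hΓ₀⟩, ht⟩ : ∃ t₀ ∈ A, T - ε < t₀ :=
      exists_lt_of_lt_csSup hAne (by linarith)
    have ht₀T : t₀ ≤ T := le_csSup hAbdd ⟨⟨h0, h1⟩, Γ₀, ‹_›, hΓ₀⟩
    have hmem : Γ₀ ⟨t₀, h0, h1⟩ ∈ q ⁻¹' U := by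
      have := hΓ₀ ⟨t₀, h0, h1⟩
      rw [min_self] at this
      show q _ ∈ U
      rw [this]
      exact hball (show t₀ ∈ ball T ε by
        rw [mem_ball, Real.dist_eq, abs_lt]
        constructor <;> linarith)
    exact ⟨(H ⟨_, hmem⟩).2⟩
  set e := (hq (ss T)).toTrivialization with he
  have hmem : ss T ∈ e.baseSet := IsEvenlyCovered.mem_toTrivialization_baseSet _
  have hnhds : ss ⁻¹' e.baseSet ∈ nhds T :=
    hssc.continuousAt.preimage_mem_nhds (e.open_baseSet.mem_nhds hmem)
  obtain ⟨ε, hε, hball⟩ := Metric.mem_nhds_iff.mp hnhds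
  obtain ⟨t₀, ht₀A, ht₀close⟩ : ∃ t₀ ∈ A, T - ε/2 < t₀ :=
    exists_lt_of_lt_csSup hAne (by linarith)
  have ht₀T : t₀ ≤ T := le_csSup hAbdd ht₀A
  set t₂ : ℝ := min (T + ε/2) 1 with ht₂
  have ht₂0 : 0 ≤ t₂ := le_min (by linarith) zero_le_one
  have ht₂1 : t₂ ≤ 1 := min_le_right _ _
  have ht₀2 : t₀ ≤ t₂ := le_min (by linarith) ht₀A.1.2
  have hrange : ∀ r, t₀ ≤ r → r ≤ t₂ → ss r ∈ e.baseSet := by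
    intro r h1 h2
    apply hball
    rw [mem_ball, Real.dist_eq, abs_lt]
    have hub : r ≤ T + ε/2 := h2.trans (min_le_left _ _)
    constructor <;> linarith
  obtain ⟨⟨ht₀0, ht₀1⟩, Γ₀, hΓ₀0, hΓ₀proj⟩ := ht₀A
  set pt₀ : I := ⟨t₀, ht₀0, ht₀1⟩ with hpt₀
  have hq₀ : q (Γ₀ pt₀) = ss t₀ := by
    have := hΓ₀proj pt₀
    rwa [min_self] at this
  have hsrc : Γ₀ pt₀ ∈ e.source := e.mem_source.2 (by rw [hq₀]; exact hrange t₀ le_rfl ht₀2)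
  set cc := (e (Γ₀ pt₀)).2 with hcc
  set θ : I → X × (q ⁻¹' {ss T}) := fun v => (ss (min (max (v:ℝ) t₀) t₂), cc) with hθ
  have hθc : Continuous θ := by
    refine Continuous.prodMk ?_ continuous_const
    exact hssc.comp ((continuous_subtype_val.max continuous_const).min continuous_const)
  have hargmem : ∀ v : I, min (max (v:ℝ) t₀) t₂ ∈ Set.Icc t₀ t₂ :=
    fun v => ⟨le_min (le_max_right _ _) ht₀2, min_le_right _ _⟩
  have hθmem : ∀ v : I, θ v ∈ e.target := by
    intro v
    rw [e.mem_target]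
    exact hrange _ (hargmem v).1 (hargmem v).2
  set Γ' : I → E := fun v =>
    if (v:ℝ) ≤ t₀ then Γ₀ v else e.toOpenPartialHomeomorph.symm (θ v) with hΓ'
  have hΓ'c : Continuous Γ' := by
    refine Continuous.if_le ?_ ?_ continuous_subtype_val continuous_const ?_
    · exact Γ₀.continuous
    · exact e.toOpenPartialHomeomorph.continuousOn_symm.comp_continuous hθc hθmem
    · intro v hv
      have hveq : v = pt₀ := Subtype.ext hv
      have harg : min (max ((v:ℝ)) t₀) t₂ = t₀ := by
        rw [max_eq_right hv.le, min_eq_left ht₀2]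
      have hθv : θ v = e (Γ₀ pt₀) := by
        simp only [hθ]
        rw [harg]
        refine Prod.ext ?_ rfl
        rw [e.coe_fst hsrc, hq₀]
      show Γ₀ v = e.toOpenPartialHomeomorph.symm (θ v)
      rw [← e.coe_coe] at hθv
      rw [hθv, e.toOpenPartialHomeomorph.left_inv hsrc, hveq]
  have hΓ'proj : ∀ v : I, q (Γ' v) = ss (min (v:ℝ) t₂) := by
    intro v
    by_cases hv : (v:ℝ) ≤ t₀
    · simp only [hΓ', if_pos hv]
      rw [hΓ₀proj v]
      congr 1
      rw [min_eq_left hv, min_eq_left (hv.trans ht₀2)]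
    · simp only [hΓ', if_neg hv]
      push_neg at hv
      have harg : min (max ((v:ℝ)) t₀) t₂ = min (v:ℝ) t₂ := by
        rw [max_eq_left hv.le]
      have := e.proj_symm_apply (hθmem v)
      rw [this]
      simp only [hθ]
      rw [harg]
  have ht₂A : t₂ ∈ A := by
    refine ⟨⟨ht₂0, ht₂1⟩, ⟨Γ', hΓ'c⟩, ?_, hΓ'proj⟩
    show Γ' 0 = e₀
    simp only [hΓ']
    rw [if_pos (by exact_mod_cast ht₀0 : ((0:I):ℝ) ≤ t₀)]
    exact hΓ₀0
  have ht₂T : t₂ ≤ T := le_csSup hAbdd ht₂A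
  have hTeq : T = 1 := by
    by_contra hne
    have hlt : T < 1 := lt_of_le_of_ne hT1 hne
    have : T < t₂ := lt_min (by linarith) hlt
    linarith
  have ht₂eq : t₂ = 1 := by
    rw [ht₂, hTeq]
    exact min_eq_right (by linarith)
  rw [ht₂eq] at ht₂A
  obtain ⟨_, Γ, hΓ0, hΓproj⟩ := ht₂A
  refine ⟨Γ, hΓ0, fun u => ?_⟩
  rw [hΓproj u, min_eq_left u.2.2, hssI]

theorem close_lifts {E N : Type u} [MetricSpace E] [MetricSpace N] {Q : E → N}
    (Γ Γ' : C(I, E)) {ε₀ η : ℝ}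
    (hur : ∀ t : I, ∀ x y : E, dist x (Γ t) < ε₀ → dist y (Γ t) < ε₀ →
      dist (Q x) (Q y) = dist x y)
    (hε₀ : 0 < ε₀) (hη : 0 ≤ η) (hηε : η < ε₀) (h0 : Γ 0 = Γ' 0)
    (hclose : ∀ t : I, dist (Q (Γ t)) (Q (Γ' t)) ≤ η) :
    ∀ t : I, dist (Γ t) (Γ' t) ≤ η := by
  have hWeq : {t : I | dist (Γ t) (Γ' t) ≤ η} = {t : I | dist (Γ t) (Γ' t) < ε₀} := by
    ext t
    constructor
    · intro ht; exact lt_of_le_of_lt ht hηε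
    · intro ht
      have heq := hur t (Γ t) (Γ' t) (by rw [dist_self]; exact hε₀) (by rw [dist_comm]; exact ht)
      show dist (Γ t) (Γ' t) ≤ η
      rw [← heq]
      exact hclose t
  have hopen : IsOpen {t : I | dist (Γ t) (Γ' t) < ε₀} :=
    isOpen_lt (Γ.continuous.dist Γ'.continuous) continuous_const
  have hclosedW : IsClosed {t : I | dist (Γ t) (Γ' t) ≤ η} :=
    isClosed_le (Γ.continuous.dist Γ'.continuous) continuous_const
  have hclopen : IsClopen {t : I | dist (Γ t) (Γ' t) ≤ η} := ⟨hclosedW, hWeq ▸ hopen⟩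
  have huniv : {t : I | dist (Γ t) (Γ' t) ≤ η} = Set.univ :=
    hclopen.eq_univ ⟨0, by show dist (Γ 0) (Γ' 0) ≤ η; rw [h0, dist_self]; exact hη⟩
  intro t
  have : t ∈ ({t : I | dist (Γ t) (Γ' t) ≤ η}) := by rw [huniv]; trivial
  exact this

theorem exists_uniform_limit {N : Type u} [MetricSpace N] {K : Set N} (hK : IsCompact K)
    {C : ℝ} (hC : 0 ≤ C) (f : ℕ → C(I, N))
    (hlip : ∀ n, ∀ s t : I, dist (f n s) (f n t) ≤ C * dist s t)
    (hmem : ∀ n, ∀ t : I, f n t ∈ K) :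
    ∃ (φ : ℕ → ℕ) (sl : C(I, N)), StrictMono φ ∧
      Filter.Tendsto (fun k => dist (f (φ k)) sl) Filter.atTop (nhds 0) := by
  set S : Set C(I, N) :=
    {h | (∀ s t : I, dist (h s) (h t) ≤ C * dist s t) ∧ ∀ t, h t ∈ K} with hS
  have hS1 : IsCompact (ContinuousMap.toFun '' S) := by
    have heq : ContinuousMap.toFun '' S =
        (⋂ (s : I), ⋂ (t : I), {h : I → N | dist (h s) (h t) ≤ C * dist s t}) ∩
        (⋂ (t : I), {h : I → N | h t ∈ K}) := by
      ext h
      constructor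
      · rintro ⟨h', ⟨h1, h2⟩, rfl⟩
        exact ⟨by simp only [Set.mem_iInter]; exact fun s t => h1 s t,
          by simp only [Set.mem_iInter]; exact h2⟩
      · rintro ⟨h1, h2⟩
        simp only [Set.mem_iInter, Set.mem_setOf_eq] at h1 h2
        have hcont : Continuous h := by
          refine LipschitzWith.continuous (K := Real.toNNReal C)
            (LipschitzWith.of_dist_le_mul ?_)
          intro s t
          exact (h1 s t).trans (le_of_eq (by rw [Real.coe_toNNReal C hC]))
        exact ⟨⟨h, hcont⟩, ⟨h1, h2⟩, rfl⟩
    rw [heq]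
    have hclosed : IsClosed ((⋂ (s : I), ⋂ (t : I), {h : I → N | dist (h s) (h t) ≤ C * dist s t}) ∩
        (⋂ (t : I), {h : I → N | h t ∈ K})) := by
      refine IsClosed.inter ?_ ?_
      · refine isClosed_iInter fun s => isClosed_iInter fun t => ?_
        exact isClosed_le ((continuous_apply s).dist (continuous_apply t)) continuous_const
      · exact isClosed_iInter fun t => hK.isClosed.preimage (continuous_apply t)
    refine IsCompact.of_isClosed_subset (isCompact_univ_pi (fun _ : I => hK)) hclosed ?_
    intro h hh
    rw [Set.mem_univ_pi]
    intro t
    have := hh.2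
    simp only [Set.mem_iInter, Set.mem_setOf_eq] at this
    exact this t
  have hS2 : Equicontinuous ((↑) : S → I → N) := by
    intro x₀
    rw [Metric.equicontinuousAt_iff]
    intro ε hε
    refine ⟨ε / (C + 1), by positivity, ?_⟩
    intro x hx i
    calc dist (i.1 x₀) (i.1 x) ≤ C * dist x₀ x := i.2.1 x₀ x
      _ ≤ C * (ε / (C+1)) := by
          refine mul_le_mul_of_nonneg_left ?_ hC
          rw [dist_comm] at hx
          exact hx.le
      _ < ε := by
          rw [div_eq_inv_mul]
          rw [← mul_assoc]
          have h1 : C * (C+1)⁻¹ < 1 := by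
            rw [mul_inv_lt_iff₀ (by linarith)]
            linarith
          nlinarith
  have hcompact : IsCompact S := ArzelaAscoli.isCompact_of_equicontinuous S hS1 hS2
  have hseq : IsSeqCompact S := hcompact.isSeqCompact
  have hfS : ∀ n, f n ∈ S := fun n => ⟨hlip n, hmem n⟩
  obtain ⟨sl, _, φ, hφ, hconv⟩ := hseq hfS
  refine ⟨φ, sl, hφ, ?_⟩
  have := (tendsto_iff_dist_tendsto_zero).mp hconv
  simpa using this

theorem exists_pathClass_rep {Y : Type u} [TopologicalSpace Y] {y : Y}
    (g : FundamentalGroup Y y) :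
    ∃ γ : Path y y, (@FundamentalGroup.fromPath Y _ y ⟦γ⟧) = g := by
  obtain ⟨γ, hγ⟩ := Quotient.exists_rep (FundamentalGroup.toPath (X := Y) (x := y) g)
  refine ⟨γ, ?_⟩
  exact hγ

theorem chain_bound {X : Type u} [MetricSpace X] (F : I → X) {c δ' : ℝ}
    (hδ' : 0 < δ') (hc : 0 ≤ c)
    (hstep : ∀ a b : I, (a:ℝ) ≤ b → (b:ℝ) - a ≤ δ' → dist (F a) (F b) ≤ c * ((b:ℝ) - a)) :
    ∀ a b : I, (a:ℝ) ≤ b → dist (F a) (F b) ≤ c * ((b:ℝ) - a) := by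
  intro a b hab
  rcases eq_or_lt_of_le hab with heq | hab'
  · have haq : a = b := Subtype.ext heq
    subst haq
    rw [dist_self, sub_self, mul_zero]
  set m : ℕ := ⌈((b:ℝ) - a)/δ'⌉₊ with hm
  have hm0 : 0 < m := Nat.ceil_pos.mpr (div_pos (by linarith) hδ')
  have hmne : (m:ℝ) ≠ 0 := by exact_mod_cast hm0.ne'
  have hstep' : ((b:ℝ) - a)/m ≤ δ' := by
    rw [div_le_iff₀ (by exact_mod_cast hm0)]
    have h1 := Nat.le_ceil (((b:ℝ) - a)/δ')
    calc (b:ℝ) - a = (((b:ℝ)-a)/δ') * δ' := by field_simp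
      _ ≤ (m : ℝ) * δ' := by
          apply mul_le_mul_of_nonneg_right _ hδ'.le
          exact_mod_cast h1
      _ = δ' * m := by ring
  set w : ℕ → ℝ := fun j => (a:ℝ) + (min j m : ℕ) * (((b:ℝ) - a)/m) with hw
  have hnn : (0:ℝ) ≤ ((b:ℝ) - a)/m := div_nonneg (by linarith) (Nat.cast_nonneg m)
  have hwmono : Monotone w := by
    intro i j hij
    have h1 : (min i m : ℕ) ≤ (min j m : ℕ) := min_le_min hij le_rfl
    have h2 : ((min i m : ℕ) : ℝ) ≤ ((min j m : ℕ) : ℝ) := by exact_mod_cast h1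
    simp only [hw]
    nlinarith
  have hwI : ∀ j, w j ∈ Set.Icc ((a:ℝ)) ((b:ℝ)) := by
    intro j
    have h1 : ((min j m : ℕ) : ℝ) ≤ (m : ℝ) := by exact_mod_cast min_le_right j m
    have h2 : (0:ℝ) ≤ ((min j m : ℕ) : ℝ) := Nat.cast_nonneg _
    constructor
    · simp only [hw]; nlinarith
    · simp only [hw]
      have h3 : ((min j m : ℕ) : ℝ) * (((b:ℝ) - a)/m) ≤ (m : ℝ) * (((b:ℝ)-a)/m) :=
        mul_le_mul_of_nonneg_right h1 hnn
      have heq : (m : ℝ) * (((b:ℝ)-a)/m) = (b:ℝ) - a := by field_simp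
      linarith
  have hw0 : w 0 = a := by simp [hw]
  have hwm : w m = b := by
    simp only [hw, min_self]
    field_simp
    ring
  have hwmemI : ∀ j, w j ∈ I := fun j => ⟨a.2.1.trans (hwI j).1, (hwI j).2.trans b.2.2⟩
  set wI : ℕ → I := fun j => ⟨w j, hwmemI j⟩ with hwIdef
  have h0 : wI 0 = a := Subtype.ext hw0
  have hmm : wI m = b := Subtype.ext hwm
  have hstepb : ∀ i : ℕ, w (i+1) - w i ≤ δ' := by
    intro i
    have hmin : ((min (i+1) m : ℕ) : ℝ) ≤ ((min i m : ℕ) : ℝ) + 1 := by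
      have : min (i+1) m ≤ min i m + 1 := by omega
      exact_mod_cast this
    have h2 : w (i+1) - w i ≤ ((b:ℝ) - a)/m := by
      simp only [hw]
      nlinarith
    exact h2.trans hstep'
  calc dist (F a) (F b) = dist (F (wI 0)) (F (wI m)) := by rw [h0, hmm]
    _ ≤ ∑ i ∈ Finset.range m, dist (F (wI i)) (F (wI (i+1))) :=
        dist_le_range_sum_dist (fun j => F (wI j)) m
    _ ≤ ∑ i ∈ Finset.range m, c * (w (i+1) - w i) := by
        refine Finset.sum_le_sum fun i _ => ?_
        exact hstep (wI i) (wI (i+1)) (hwmono i.le_succ) (hstepb i)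
    _ = c * ∑ i ∈ Finset.range m, (w (i+1) - w i) := by rw [Finset.mul_sum]
    _ = c * ((b:ℝ) - a) := by rw [Finset.sum_range_sub w m, hw0, hwm]

end MyAux

theorem stmt3
    -- `N` is a complete Riemannian manifold: a smooth manifold modeled on `ℝⁿ` whose
    -- (Riemannian) distance makes it a complete length metric space
    {n : ℕ} {N : Type} [MetricSpace N] [CompleteSpace N]
    [ChartedSpace (EuclideanSpace ℝ (Fin n)) N] [IsManifold (𝓡 n) (⊤ : ℕ∞) N]
    (hlen : IsLengthSpace N)
    (p : N) (R : ℝ) (hR : 0 < R)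
    -- `E` is the universal cover of the open ball `B_p(R)`, equipped with the lifted
    -- (covering) metric
    (E : Type) [MetricSpace E] [PathConnectedSpace E] [SimplyConnectedSpace E]
    (q : E → ball p R) (hq : IsCoveringMap q) (hlenE : IsLengthSpace E)
    (hloc : ∀ e : E, ∃ ε > 0, ∀ x y : E, dist x e < ε → dist y e < ε →
      dist (q x) (q y) = dist x y)
    (pt : E) (hpt : q pt = ctr p hR)
    -- `ep g = g • p̃` is the deck-transformation action of `g ∈ π₁(B_p(R), p)` on `p̃`
    (ep : FundamentalGroup (ball p R) (ctr p hR) → E)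
    (hep : ∀ g (γ : Path (ctr p hR) (ctr p hR)), pathClass γ = g →
      ∀ Γ : C(I, E), (∀ t, q (Γ t) = γ t) → Γ 0 = pt → Γ 1 = ep g)
    (g : FundamentalGroup (ball p R) (ctr p hR)) (hg : dist pt (ep g) < 2 * R) :
    -- there is a minimizing geodesic in `E` from `p̃` to `g p̃`
    ∃ γ : Path pt (ep g), ∀ s t : I,
      dist (γ s) (γ t) = |(s : ℝ) - (t : ℝ)| * dist pt (ep g) := by
  classical
  set d : ℝ := dist pt (ep g) with hd
  have hd0 : 0 ≤ d := dist_nonneg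
  set Q : E → N := fun e => ((q e : ball p R) : N) with hQ
  have hQdist : ∀ x y : E, dist (q x) (q y) = dist (Q x) (Q y) := fun x y => Subtype.dist_eq _ _
  have hlocQ : ∀ e : E, ∃ ε > 0, ∀ x y : E, dist x e < ε → dist y e < ε →
      dist (Q x) (Q y) = dist x y := by
    intro e
    obtain ⟨ε, hε, hloc'⟩ := hloc e
    exact ⟨ε, hε, fun x y hx hy => by rw [← hQdist]; exact hloc' x y hx hy⟩
  have hQlip : ∀ x y : E, dist (Q x) (Q y) ≤ dist x y := Q_lipschitz hlocQ hlenE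
  have hQpt : Q pt = p := by
    show ((q pt : ball p R) : N) = p
    rw [hpt]
    rfl
  have hLC : LocallyCompactSpace N :=
    ChartedSpace.locallyCompactSpace (EuclideanSpace ℝ (Fin n)) N
  -- Q (ep g) = p
  have hQep : Q (ep g) = p := by
    obtain ⟨γ₀, hγ₀⟩ := exists_pathClass_rep (Y := ↥(ball p R)) (y := ctr p hR) g
    obtain ⟨Γ, hΓ0, hΓproj⟩ := covering_path_lift hq γ₀.toContinuousMap pt
      (by rw [hpt]; exact (γ₀.source).symm)
    have h1 : Γ 1 = ep g := hep g γ₀ hγ₀ Γ (fun t => hΓproj t) hΓ0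
    have h2 : q (ep g) = ctr p hR := by
      rw [← h1, hΓproj 1]
      exact γ₀.target
    show ((q (ep g) : ball p R) : N) = p
    rw [h2]
    rfl
  -- constants
  set τ : ℝ := (2*R - d)/2 with hτdef
  have hτ : 0 < τ := by simp only [hτdef]; linarith
  set L : ℝ := d + τ with hLdef
  have hL : 0 < L := by positivity
  set r : ℝ := L/2 with hrdef
  have hrR : r < R := by simp only [hrdef, hLdef, hτdef]; linarith
  -- approximating constant-speed paths
  have hseq : ∀ m : ℕ, ∃ γ' : Path pt (ep g), ∀ s t : I,
      dist (γ' s) (γ' t) ≤ (d + min τ (1/(m+1))) * |(s:ℝ) - (t:ℝ)| := by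
    intro m
    have hpos : 0 < min τ (1/(m+1)) := lt_min hτ (by positivity)
    obtain ⟨γm, hγm⟩ := exists_path_length_le hlenE pt (ep g) hpos
    exact exists_lipschitz_path γm (by linarith) hγm
  choose gam hgam using hseq
  have hεle : ∀ m : ℕ, min τ (1/((m:ℝ)+1)) ≤ τ := fun m => min_le_left _ _
  -- projected paths
  set f : ℕ → C(I, N) := fun m =>
    ⟨fun t => Q (gam m t), continuous_subtype_val.comp (hq.continuous.comp (gam m).continuous)⟩
    with hfdef
  have hflip : ∀ m, ∀ s t : I, dist (f m s) (f m t) ≤ L * dist s t := by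
    intro m s t
    have h1 : dist (f m s) (f m t) ≤ dist (gam m s) (gam m t) := hQlip _ _
    have h2 := hgam m s t
    have h3 : |(s:ℝ) - (t:ℝ)| = dist s t := by
      rw [Subtype.dist_eq, Real.dist_eq]
    rw [h3] at h2
    refine h1.trans (h2.trans ?_)
    refine mul_le_mul_of_nonneg_right ?_ dist_nonneg
    simp only [hLdef]
    linarith [hεle m]
  have hfmem : ∀ m, ∀ t : I, f m t ∈ closedBall p r := by
    intro m t
    rw [mem_closedBall]
    show dist (Q (gam m t)) p ≤ r
    have h0I : (((0:I)):ℝ) = 0 := rfl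
    have h1I : (((1:I)):ℝ) = 1 := rfl
    have hbase : dist (Q (gam m t)) p ≤ (d + min τ (1/(m+1))) * min (t:ℝ) (1 - t) := by
      rcases le_total ((t:ℝ)) (1 - (t:ℝ)) with hcase | hcase
      · rw [min_eq_left hcase, ← hQpt]
        have hQ0 : Q pt = Q (gam m 0) := by rw [(gam m).source]
        rw [hQ0]
        refine (hQlip _ _).trans ((hgam m t 0).trans (le_of_eq ?_))
        rw [h0I, sub_zero, abs_of_nonneg t.2.1]
      · rw [min_eq_right hcase, ← hQep]
        have hQ1 : Q (ep g) = Q (gam m 1) := by rw [(gam m).target]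
        rw [hQ1]
        refine (hQlip _ _).trans ((hgam m t 1).trans (le_of_eq ?_))
        rw [h1I, abs_of_nonpos (by linarith [t.2.2] : (t:ℝ) - 1 ≤ 0)]
        ring
    refine hbase.trans ?_
    have hmin : min (t:ℝ) (1 - t) ≤ 1/2 := by
      rcases le_total ((t:ℝ)) (1 - (t:ℝ)) with hcase | hcase
      · rw [min_eq_left hcase]; linarith
      · rw [min_eq_right hcase]; linarith
    have hmin0 : 0 ≤ min (t:ℝ) (1 - t) := le_min t.2.1 (by linarith [t.2.2])
    calc (d + min τ (1/(m+1))) * min (t:ℝ) (1 - t) ≤ L * min (t:ℝ) (1-t) := by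
          refine mul_le_mul_of_nonneg_right ?_ hmin0
          simp only [hLdef]; linarith [hεle m]
      _ ≤ L * (1/2) := mul_le_mul_of_nonneg_left hmin hL.le
      _ = r := by rw [hrdef]; ring
  -- Arzela-Ascoli
  obtain ⟨φ, sl, hφ, hconv⟩ :=
    exists_uniform_limit (hr_proper hlen p r) hL.le f hflip hfmem
  set D : ℕ → ℝ := fun k => dist (f (φ k)) sl with hDdef
  have hD0 : ∀ k, 0 ≤ D k := fun k => dist_nonneg
  have happly : ∀ k (t : I), dist (f (φ k) t) (sl t) ≤ D k :=
    fun k t => ContinuousMap.dist_apply_le_dist t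
  -- endpoints of sl
  have hsl0 : sl 0 = p := by
    have h1 : ∀ k, dist p (sl 0) ≤ D k := by
      intro k
      have := happly k 0
      rwa [show f (φ k) 0 = p by
        show Q (gam (φ k) 0) = p
        rw [(gam (φ k)).source, hQpt]] at this
    have h2 : dist p (sl 0) ≤ 0 := ge_of_tendsto hconv (Filter.Eventually.of_forall h1)
    have := le_antisymm h2 dist_nonneg
    rw [dist_comm] at this
    exact dist_eq_zero.mp this
  have hsl1 : sl 1 = p := by
    have h1 : ∀ k, dist p (sl 1) ≤ D k := by
      intro k
      have := happly k 1
      rwa [show f (φ k) 1 = p by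
        show Q (gam (φ k) 1) = p
        rw [(gam (φ k)).target, hQep]] at this
    have h2 : dist p (sl 1) ≤ 0 := ge_of_tendsto hconv (Filter.Eventually.of_forall h1)
    have := le_antisymm h2 dist_nonneg
    rw [dist_comm] at this
    exact dist_eq_zero.mp this
  -- sl is d-Lipschitz
  have hslLip : ∀ s t : I, dist (sl s) (sl t) ≤ d * |(s:ℝ) - (t:ℝ)| := by
    intro s t
    have hptwise : ∀ k, dist (sl s) (sl t) ≤ 2 * D k + (d + 1/((k:ℝ)+1)) * |(s:ℝ) - (t:ℝ)| := by
      intro k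
      have h1 : dist (sl s) (sl t) ≤
          dist (sl s) (f (φ k) s) + dist (f (φ k) s) (f (φ k) t) + dist (f (φ k) t) (sl t) :=
        dist_triangle4 _ _ _ _
      have h2 : dist (f (φ k) s) (f (φ k) t) ≤ (d + 1/((k:ℝ)+1)) * |(s:ℝ) - (t:ℝ)| := by
        refine ((hQlip _ _).trans ((hgam (φ k) s t).trans ?_))
        refine mul_le_mul_of_nonneg_right ?_ (abs_nonneg _)
        have : min τ (1/((φ k : ℝ)+1)) ≤ 1/((k:ℝ)+1) := by
          refine (min_le_right _ _).trans ?_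
          have hk9 : k ≤ φ k := hφ.le_apply
          have hk : (k:ℝ) + 1 ≤ (φ k : ℝ) + 1 := by
            have := (Nat.cast_le (α := ℝ)).mpr hk9
            linarith
          exact one_div_le_one_div_of_le (by positivity) hk
        linarith
      have h3 : dist (sl s) (f (φ k) s) ≤ D k := by rw [dist_comm]; exact happly k s
      have h4 : dist (f (φ k) t) (sl t) ≤ D k := happly k t
      linarith
    have hlim : Filter.Tendsto (fun k => 2 * D k + (d + 1/((k:ℝ)+1)) * |(s:ℝ) - (t:ℝ)|)
        Filter.atTop (nhds (2 * 0 + (d + 0) * |(s:ℝ) - (t:ℝ)|)) := by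
      refine Filter.Tendsto.add ((hconv.const_mul 2)) ?_
      refine Filter.Tendsto.mul_const _ ?_
      exact (tendsto_const_nhds.add tendsto_one_div_add_atTop_nhds_zero_nat)
    have := ge_of_tendsto hlim (Filter.Eventually.of_forall hptwise)
    simpa using this
  -- sl stays in the ball
  have hslmem : ∀ t : I, sl t ∈ ball p R := by
    intro t
    rw [mem_ball]
    have h1 : ∀ k, dist (sl t) p ≤ D k + r := by
      intro k
      have h2 := hfmem (φ k) t
      rw [mem_closedBall] at h2
      calc dist (sl t) p ≤ dist (sl t) (f (φ k) t) + dist (f (φ k) t) p := dist_triangle _ _ _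
        _ ≤ D k + r := add_le_add (by rw [dist_comm]; exact happly k t) h2
    have h2 : dist (sl t) p ≤ 0 + r := by
      exact ge_of_tendsto (hconv.add_const r) (Filter.Eventually.of_forall h1)
    rw [zero_add] at h2
    exact lt_of_le_of_lt h2 hrR
  set sl' : C(I, ↥(ball p R)) := ⟨fun t => ⟨sl t, hslmem t⟩, (map_continuous sl).subtype_mk _⟩
    with hsl'def
  -- lift sl
  obtain ⟨Γ, hΓ0, hΓproj⟩ := covering_path_lift hq sl' pt (by
    refine Subtype.ext ?_
    show ((q pt : ball p R) : N) = sl 0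
    rw [hpt, hsl0]; rfl)
  have hQΓ : ∀ t : I, Q (Γ t) = sl t := fun t => congrArg Subtype.val (hΓproj t)
  -- uniform radius along Γ
  obtain ⟨ε₀, hε₀, hur'⟩ := uniform_radius hlocQ (isCompact_range (map_continuous Γ))
  have hur : ∀ t : I, ∀ x y : E, dist x (Γ t) < ε₀ → dist y (Γ t) < ε₀ →
      dist (Q x) (Q y) = dist x y := fun t => hur' (Γ t) (Set.mem_range_self t)
  -- Γ 1 = ep g
  have hΓ1 : Γ 1 = ep g := by
    have hkey : ∀ k, D k < ε₀ → dist (Γ 1) (ep g) ≤ D k := by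
      intro k hk
      have hclose : ∀ t : I, dist (Q (Γ t)) (Q ((gam (φ k)).toContinuousMap t)) ≤ D k := by
        intro t
        rw [hQΓ t]
        have := happly k t
        rw [dist_comm]
        exact this
      have h0' : Γ 0 = (gam (φ k)).toContinuousMap 0 := by
        rw [hΓ0]
        exact ((gam (φ k)).source).symm
      have := close_lifts (Q := Q) Γ (gam (φ k)).toContinuousMap hur hε₀ (hD0 k) hk h0' hclose 1
      rwa [show (gam (φ k)).toContinuousMap 1 = ep g from (gam (φ k)).target] at this
    have hev : ∀ᶠ k in Filter.atTop, dist (Γ 1) (ep g) ≤ D k := by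
      have hlt : ∀ᶠ k in Filter.atTop, D k < ε₀ :=
        hconv.eventually (eventually_lt_nhds hε₀)
      exact hlt.mono fun k hk => hkey k hk
    have h2 : dist (Γ 1) (ep g) ≤ 0 := ge_of_tendsto hconv hev
    exact dist_eq_zero.mp (le_antisymm h2 dist_nonneg)
  -- Γ is d-Lipschitz via chaining
  obtain ⟨δ, hδ, hUC⟩ := Metric.uniformContinuous_iff.mp
    (CompactSpace.uniformContinuous_of_continuous (map_continuous Γ)) ε₀ hε₀
  have hΓLip : ∀ a b : I, (a:ℝ) ≤ b → dist (Γ a) (Γ b) ≤ d * ((b:ℝ) - a) := by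
    refine chain_bound (fun t => Γ t) (half_pos hδ) hd0 ?_
    intro a b hab hsmall
    have hdistab : dist a b < δ := by
      rw [Subtype.dist_eq, Real.dist_eq, abs_of_nonpos (by linarith), neg_sub]
      linarith
    have h1 : dist (Γ a) (Γ b) = dist (Q (Γ a)) (Q (Γ b)) := by
      refine (hur a (Γ a) (Γ b) (by rw [dist_self]; exact hε₀) ?_).symm
      rw [dist_comm]
      exact hUC hdistab
    rw [h1, hQΓ, hQΓ]
    refine (hslLip a b).trans (le_of_eq ?_)
    rw [abs_of_nonpos (by linarith), neg_sub]
  -- conclusion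
  have hends : dist (Γ 0) (Γ 1) = d := by rw [hΓ0, hΓ1]
  have hmain : ∀ a b : I, (a:ℝ) ≤ b → dist (Γ a) (Γ b) = d * ((b:ℝ) - a) := by
    intro a b hab
    refine le_antisymm (hΓLip a b hab) ?_
    have h1 : dist (Γ 0) (Γ a) ≤ d * ((a:ℝ) - 0) := hΓLip 0 a a.2.1
    have h2 : dist (Γ b) (Γ 1) ≤ d * (1 - (b:ℝ)) := hΓLip b 1 b.2.2
    have h3 : dist (Γ 0) (Γ 1) ≤ dist (Γ 0) (Γ a) + dist (Γ a) (Γ b) + dist (Γ b) (Γ 1) :=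
      dist_triangle4 _ _ _ _
    rw [hends] at h3
    nlinarith [h1, h2, h3]
  refine ⟨⟨Γ, hΓ0, hΓ1⟩, ?_⟩
  intro s t
  show dist (Γ s) (Γ t) = |(s:ℝ) - (t:ℝ)| * d
  rcases le_total ((s:ℝ)) ((t:ℝ)) with hst | hst
  · rw [hmain s t hst, abs_of_nonpos (by linarith), neg_sub]
    ring
  · rw [dist_comm, hmain t s hst, abs_of_nonneg (by linarith)]
    ring
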